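/- (Deterministic hopset stretch and hopbound for an arbitrary hierarchy) There exists an absolute constant c ≥ 1 such that the following holds for every Thorup–Zwick hierarchy over a finite connected weighted graph G as in the context. For every real ε with 0 < ε < 1/6 and all vertices u, v, there exists an m-hop path from u to v in G ∪ H with m ≤ c·ℓ·⌈ε^{−(ℓ−1)}⌉ and length at most (1 + c·ℓ·ε)·d_G(u,v). -/

import Mathlib

/-- The total weight of a walk, where `w x y` is the weight of the edge `(x,y)`. -/
noncomputable def walkWeight {V : Type} {G : SimpleGraph V} (w : V → V → ℝ) {u v : V}
    (p : G.Walk u v) : ℝ :=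
  (p.darts.map fun d => w d.toProd.1 d.toProd.2).sum

/-- The weighted shortest-path distance in `G` with edge weights `w`. -/
noncomputable def wdist {V : Type} (G : SimpleGraph V) (w : V → V → ℝ) (u v : V) : ℝ :=
  sInf {L : ℝ | ∃ p : G.Walk u v, L = walkWeight w p}

/-- The Thorup–Zwick hopset for a hierarchy `A 0 ⊇ A 1 ⊇ ⋯` with pivots `p` over a
weighted graph `(G, w)`: for `u ∈ A i \ A (i+1)` with `i ≤ ℓ-2`, `u` is joined to every
`v` in its bunch `{v ∈ A i : d_G(u,v) < d_G(u, A (i+1))} ∪ {p (i+1) u}`, and all pairs of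
vertices of `A (ℓ-1)` are joined. -/
noncomputable def tzHopset {V : Type} (G : SimpleGraph V) (w : V → V → ℝ) (ℓ : ℕ)
    (A : ℕ → Set V) (p : ℕ → V → V) : Set (Sym2 V) :=
  {e | ∃ u v : V, v ≠ u ∧ e = s(u, v) ∧
    ((∃ i, i ≤ ℓ - 2 ∧ u ∈ A i ∧ u ∉ A (i + 1) ∧
        ((v ∈ A i ∧ ∀ z ∈ A (i + 1), wdist G w u v < wdist G w u z) ∨ v = p (i + 1) u)) ∨
      (u ∈ A (ℓ - 1) ∧ v ∈ A (ℓ - 1)))}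

namespace TZP

variable {V : Type} {G : SimpleGraph V} {w : V → V → ℝ}

lemma walkWeight_nonneg (hpos : ∀ x y : V, G.Adj x y → 0 < w x y) {u v : V}
    (p : G.Walk u v) : 0 ≤ walkWeight w p := by
  unfold walkWeight
  apply List.sum_nonneg
  intro x hx
  simp only [List.mem_map] at hx
  obtain ⟨d, _, rfl⟩ := hx
  exact (hpos _ _ d.adj).le

lemma wdist_set_nonempty (hconn : G.Connected) (u v : V) :
    {L : ℝ | ∃ p : G.Walk u v, L = walkWeight w p}.Nonempty := by
  obtain ⟨p⟩ := hconn.preconnected u v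
  exact ⟨walkWeight w p, p, rfl⟩

lemma wdist_set_bddBelow (hpos : ∀ x y : V, G.Adj x y → 0 < w x y) (u v : V) :
    BddBelow {L : ℝ | ∃ p : G.Walk u v, L = walkWeight w p} := by
  refine ⟨0, ?_⟩
  rintro L ⟨p, rfl⟩
  exact walkWeight_nonneg hpos p

lemma wdist_nonneg (hconn : G.Connected) (hpos : ∀ x y : V, G.Adj x y → 0 < w x y)
    (u v : V) : 0 ≤ wdist G w u v := by
  apply le_csInf (wdist_set_nonempty hconn u v)
  rintro L ⟨p, rfl⟩
  exact walkWeight_nonneg hpos p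

lemma wdist_le_walkWeight (hpos : ∀ x y : V, G.Adj x y → 0 < w x y) {u v : V}
    (p : G.Walk u v) : wdist G w u v ≤ walkWeight w p :=
  csInf_le (wdist_set_bddBelow hpos u v) ⟨p, rfl⟩

lemma wdist_self (hconn : G.Connected) (hpos : ∀ x y : V, G.Adj x y → 0 < w x y)
    (u : V) : wdist G w u u = 0 := by
  refine le_antisymm ?_ (wdist_nonneg hconn hpos u u)
  have := wdist_le_walkWeight (G := G) hpos (SimpleGraph.Walk.nil (u := u))
  simpa [walkWeight] using this

lemma exists_walk_lt (hconn : G.Connected) {u v : V} {η : ℝ} (hη : 0 < η) :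
    ∃ p : G.Walk u v, walkWeight w p < wdist G w u v + η := by
  obtain ⟨a, ⟨p, rfl⟩, ha⟩ := Real.lt_sInf_add_pos (wdist_set_nonempty hconn u v) hη
  exact ⟨p, ha⟩

lemma walkWeight_append {u x v : V} (p : G.Walk u x) (q : G.Walk x v) :
    walkWeight w (p.append q) = walkWeight w p + walkWeight w q := by
  unfold walkWeight
  rw [SimpleGraph.Walk.darts_append, List.map_append, List.sum_append]

lemma wdist_triangle (hconn : G.Connected) (hpos : ∀ x y : V, G.Adj x y → 0 < w x y)
    (u x v : V) : wdist G w u v ≤ wdist G w u x + wdist G w x v := by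
  refine le_of_forall_pos_le_add ?_
  intro η hη
  obtain ⟨p, hp⟩ := exists_walk_lt (w := w) hconn (u := u) (v := x) (half_pos hη)
  obtain ⟨q, hq⟩ := exists_walk_lt (w := w) hconn (u := x) (v := v) (half_pos hη)
  have h := wdist_le_walkWeight (G := G) hpos (p.append q)
  rw [walkWeight_append] at h
  linarith

lemma walkWeight_reverse (hsymm : ∀ x y : V, w x y = w y x) {u v : V} (p : G.Walk u v) :
    walkWeight w p.reverse = walkWeight w p := by
  unfold walkWeight
  rw [SimpleGraph.Walk.darts_reverse, List.map_reverse, List.sum_reverse, List.map_map]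
  congr 1
  apply List.map_congr_left
  intro d _
  exact (hsymm _ _)

lemma wdist_symm (hconn : G.Connected) (hsymm : ∀ x y : V, w x y = w y x)
    (hpos : ∀ x y : V, G.Adj x y → 0 < w x y) (u v : V) :
    wdist G w u v = wdist G w v u := by
  have key : ∀ a b : V, wdist G w b a ≤ wdist G w a b := by
    intro a b
    apply le_csInf (wdist_set_nonempty hconn a b)
    rintro L ⟨p, rfl⟩
    have := wdist_le_walkWeight (G := G) hpos p.reverse
    rwa [walkWeight_reverse hsymm] at this
  exact le_antisymm (key v u) (key u v)

lemma wdist_le_of_adj (hpos : ∀ x y : V, G.Adj x y → 0 < w x y) {x y : V}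
    (h : G.Adj x y) : wdist G w x y ≤ w x y := by
  have := wdist_le_walkWeight (G := G) hpos (SimpleGraph.Walk.cons h SimpleGraph.Walk.nil)
  simpa [walkWeight] using this

lemma walkWeight_cons {u x v : V} (h : G.Adj u x) (q : G.Walk x v) :
    walkWeight w (SimpleGraph.Walk.cons h q) = w u x + walkWeight w q := by
  simp [walkWeight]

lemma wdist_pos (hconn : G.Connected) (hpos : ∀ x y : V, G.Adj x y → 0 < w x y)
    [Fintype V] {u v : V} (hne : u ≠ v) : 0 < wdist G w u v := by
  classical
  have hexadj : ∃ q : V × V, G.Adj q.1 q.2 := by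
    obtain ⟨p⟩ := hconn.preconnected u v
    cases p with
    | nil => exact absurd rfl hne
    | cons h q => exact ⟨(_, _), h⟩
  set s : Finset (V × V) := Finset.univ.filter (fun q : V × V => G.Adj q.1 q.2) with hs
  have hsne : s.Nonempty := by
    obtain ⟨q, hq⟩ := hexadj
    exact ⟨q, by simp [hs, hq]⟩
  set m0 : ℝ := s.inf' hsne (fun q => w q.1 q.2) with hm0
  have hm0pos : 0 < m0 := by
    rw [hm0, Finset.lt_inf'_iff]
    intro q hq
    rw [hs, Finset.mem_filter] at hq
    exact hpos _ _ hq.2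
  have hlb : ∀ L ∈ {L : ℝ | ∃ p : G.Walk u v, L = walkWeight w p}, m0 ≤ L := by
    rintro L ⟨p, rfl⟩
    cases p with
    | nil => exact absurd rfl hne
    | @cons _ x _ h q =>
      rw [walkWeight_cons]
      have h1 : m0 ≤ w u x := by
        apply Finset.inf'_le (f := fun q : V × V => w q.1 q.2) (b := (u, x))
        simp [hs, h]
      have h2 : 0 ≤ walkWeight w q := walkWeight_nonneg hpos q
      linarith
  have := le_csInf (wdist_set_nonempty hconn u v) hlb
  calc (0:ℝ) < m0 := hm0pos
    _ ≤ _ := this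

lemma walkWeight_eq_sum {u v : V} (p : G.Walk u v) :
    walkWeight w p = ∑ i ∈ Finset.range p.length, w (p.getVert i) (p.getVert (i + 1)) := by
  induction p with
  | nil => simp [walkWeight]
  | cons h q ih =>
    rw [walkWeight_cons, ih]
    rw [SimpleGraph.Walk.length_cons, Finset.sum_range_succ']
    simp [SimpleGraph.Walk.getVert_cons_succ]
    ring

section Greedy

variable (n : ℕ) (ρ : ℕ → ℝ) (r : ℕ → ℝ)

/-- jump validity -/
def jv (k k' : ℕ) : Prop := ρ k' - ρ k < min (r k) (r k')

open Classical in
noncomputable def cand (k : ℕ) : Finset ℕ :=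
  (Finset.range (n+1)).filter (fun k' => k < k' ∧ (k' = k + 1 ∨ jv ρ r k k'))

noncomputable def mv (k : ℕ) : ℕ :=
  if h : (cand n ρ r k).Nonempty then (cand n ρ r k).max' h else n

noncomputable def KK : ℕ → ℕ :=
  fun i => Nat.rec 0 (fun _ prev => if prev < n then mv n ρ r prev else n) i

lemma mem_cand {k k' : ℕ} :
    k' ∈ cand n ρ r k ↔ (k' ≤ n ∧ k < k' ∧ (k' = k + 1 ∨ jv ρ r k k')) := by
  classical
  rw [cand, Finset.mem_filter, Finset.mem_range, Nat.lt_succ_iff]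

lemma cand_nonempty {k : ℕ} (hk : k < n) : (cand n ρ r k).Nonempty := by
  exact ⟨k + 1, (mem_cand n ρ r).2 ⟨hk, Nat.lt_succ_self k, Or.inl rfl⟩⟩

lemma mv_spec {k : ℕ} (hk : k < n) :
    k < mv n ρ r k ∧ mv n ρ r k ≤ n ∧ (mv n ρ r k = k + 1 ∨ jv ρ r k (mv n ρ r k)) := by
  have h := cand_nonempty n ρ r hk
  have hmem : mv n ρ r k ∈ cand n ρ r k := by
    rw [mv, dif_pos h]; exact Finset.max'_mem _ h
  rw [mem_cand] at hmem
  exact ⟨hmem.2.1, hmem.1, hmem.2.2⟩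

lemma mv_ge {k k' : ℕ} (hk : k < n) (h1 : k < k') (h2 : k' ≤ n) (h3 : jv ρ r k k') :
    k' ≤ mv n ρ r k := by
  have h := cand_nonempty n ρ r hk
  rw [mv, dif_pos h]
  exact Finset.le_max' _ _ ((mem_cand n ρ r).2 ⟨h2, h1, Or.inr h3⟩)

lemma KK_zero : KK n ρ r 0 = 0 := rfl

lemma KK_succ (i : ℕ) :
    KK n ρ r (i+1) = if KK n ρ r i < n then mv n ρ r (KK n ρ r i) else n := rfl

lemma KK_le (i : ℕ) : KK n ρ r i ≤ n := by
  induction i with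
  | zero => exact Nat.zero_le n
  | succ i ih =>
    rw [KK_succ]
    split
    · exact (mv_spec n ρ r (by assumption)).2.1
    · exact le_rfl

lemma exists_KK_eq : ∃ i, KK n ρ r i = n := by
  have key : ∀ i, KK n ρ r i = n ∨ i ≤ KK n ρ r i := by
    intro i
    induction i with
    | zero => exact Or.inr (Nat.zero_le _)
    | succ i ih =>
      rcases ih with h | h
      · left; rw [KK_succ, h, if_neg (lt_irrefl n)]
      · by_cases hn : KK n ρ r i = n
        · left; rw [KK_succ, hn, if_neg (lt_irrefl n)]
        · right
          have hlt : KK n ρ r i < n := lt_of_le_of_ne (KK_le n ρ r i) hn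
          rw [KK_succ, if_pos hlt]
          have := (mv_spec n ρ r hlt).1
          omega
  rcases key n with h | h
  · exact ⟨n, h⟩
  · exact ⟨n, le_antisymm (KK_le n ρ r n) h⟩

lemma KK_lt_n {M : ℕ} (hKlt : ∀ i < M, KK n ρ r i ≠ n) {i : ℕ} (hi : i < M) :
    KK n ρ r i < n :=
  lt_of_le_of_ne (KK_le n ρ r i) (hKlt i hi)

lemma KK_strict {M : ℕ} (hKlt : ∀ i < M, KK n ρ r i ≠ n) {i : ℕ} (hi : i < M) :
    KK n ρ r i < KK n ρ r (i+1) := by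
  rw [KK_succ, if_pos (KK_lt_n n ρ r hKlt hi)]
  exact (mv_spec n ρ r (KK_lt_n n ρ r hKlt hi)).1

lemma KK_mono {M : ℕ} (hKlt : ∀ i < M, KK n ρ r i ≠ n) {i j : ℕ} (hij : i ≤ j)
    (hj : j ≤ M) : KK n ρ r i ≤ KK n ρ r j := by
  induction j with
  | zero => exact le_of_eq (by rw [Nat.le_zero.mp hij])
  | succ j ih =>
    rcases Nat.eq_or_lt_of_le hij with rfl | h
    · exact le_rfl
    · have h1 : KK n ρ r i ≤ KK n ρ r j := ih (by omega) (by omega)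
      have h2 := KK_strict n ρ r hKlt (show j < M by omega)
      omega

lemma KK_strictmono {M : ℕ} (hKlt : ∀ i < M, KK n ρ r i ≠ n) {i j : ℕ} (hij : i < j)
    (hj : j ≤ M) : KK n ρ r i < KK n ρ r j := by
  have h1 := KK_strict n ρ r hKlt (show i < M by omega)
  have h2 := KK_mono n ρ r hKlt (show i + 1 ≤ j by omega) hj
  omega

lemma not_jv {M : ℕ} (hKlt : ∀ i < M, KK n ρ r i ≠ n) {i i' : ℕ} (h : i + 2 ≤ i')
    (hi' : i' ≤ M) : ¬ jv ρ r (KK n ρ r i) (KK n ρ r i') := by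
  intro hjv
  have hiM : i < M := by omega
  have hlt : KK n ρ r i < KK n ρ r i' := KK_strictmono n ρ r hKlt (by omega) hi'
  have hle : KK n ρ r i' ≤ mv n ρ r (KK n ρ r i) :=
    mv_ge n ρ r (KK_lt_n n ρ r hKlt hiM) hlt (KK_le n ρ r i') hjv
  have heq : KK n ρ r (i+1) = mv n ρ r (KK n ρ r i) := by
    rw [KK_succ, if_pos (KK_lt_n n ρ r hKlt hiM)]
  have h2 := KK_strictmono n ρ r hKlt (show i + 1 < i' by omega) hi'
  omega

lemma count_le {M : ℕ} (hKlt : ∀ i < M, KK n ρ r i ≠ n)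
    (hρ0 : ∀ k, k ≤ n → 0 ≤ ρ k) (hρn : ∀ k, k ≤ n → ρ k ≤ ρ n)
    (P : ℕ → Prop) [DecidablePred P] (θ : ℝ) (hθ : 0 < θ)
    (hP : ∀ i, i < M → P i → θ ≤ r (KK n ρ r i)) :
    (((Finset.range M).filter P).card : ℝ) ≤ 2 * (ρ n / θ) + 2 := by
  classical
  set s : Finset ℕ := (Finset.range M).filter P with hs
  have hsM : ∀ i ∈ s, i < M := by
    intro i hi; rw [hs, Finset.mem_filter, Finset.mem_range] at hi; exact hi.1
  have hsP : ∀ i ∈ s, P i := by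
    intro i hi; rw [hs, Finset.mem_filter] at hi; exact hi.2
  set f : ℕ → ℕ := fun i => ⌊ρ (KK n ρ r i) / θ⌋₊ with hf
  have hρKnonneg : ∀ i, i < M → 0 ≤ ρ (KK n ρ r i) := fun i _ =>
    hρ0 _ (KK_le n ρ r i)
  have hgap : ∀ a ∈ s, ∀ c ∈ s, a + 2 ≤ c → θ ≤ ρ (KK n ρ r c) - ρ (KK n ρ r a) := by
    intro a ha c hc hac
    have hnjv := not_jv n ρ r hKlt hac (le_of_lt (hsM c hc))
    rw [jv, not_lt] at hnjv
    have h1 : θ ≤ r (KK n ρ r a) := hP a (hsM a ha) (hsP a ha)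
    have h2 : θ ≤ r (KK n ρ r c) := hP c (hsM c hc) (hsP c hc)
    calc θ ≤ min (r (KK n ρ r a)) (r (KK n ρ r c)) := le_min h1 h2
      _ ≤ _ := hnjv
  have hfib : ∀ b ∈ s.image f, (s.filter (fun i => f i = b)).card ≤ 2 := by
    intro b _
    by_contra hcard
    push_neg at hcard
    set T : Finset ℕ := s.filter (fun i => f i = b) with hT
    have hTne : T.Nonempty := Finset.card_pos.mp (by omega)
    set a := T.min' hTne with hadef
    set c := T.max' hTne with hcdef
    have haT : a ∈ T := Finset.min'_mem _ _
    have hcT : c ∈ T := Finset.max'_mem _ _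
    have haS : a ∈ s := (Finset.mem_filter.mp haT).1
    have hcS : c ∈ s := (Finset.mem_filter.mp hcT).1
    have hfa : f a = b := (Finset.mem_filter.mp haT).2
    have hfc : f c = b := (Finset.mem_filter.mp hcT).2
    have hac2 : a + 2 ≤ c := by
      by_contra hlt
      push_neg at hlt
      have hsub : T ⊆ Finset.Icc a c := by
        intro x hx
        exact Finset.mem_Icc.mpr ⟨Finset.min'_le _ _ hx, Finset.le_max' _ _ hx⟩
      have := Finset.card_le_card hsub
      rw [Nat.card_Icc] at this
      omega
    have hgapac := hgap a haS c hcS hac2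
    have h1 : (b : ℝ) ≤ ρ (KK n ρ r a) / θ := by
      rw [← hfa, hf]
      exact Nat.floor_le (div_nonneg (hρKnonneg a (hsM a haS)) hθ.le)
    have h2 : ρ (KK n ρ r c) / θ < (b : ℝ) + 1 := by
      rw [← hfc, hf]
      exact Nat.lt_floor_add_one _
    have h1' : (b : ℝ) * θ ≤ ρ (KK n ρ r a) := by
      rwa [← le_div_iff₀ hθ]
    have h2' : ρ (KK n ρ r c) < ((b : ℝ) + 1) * θ := by
      rwa [← div_lt_iff₀ hθ]
    nlinarith
  have hcard1 : s.card ≤ 2 * (s.image f).card :=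
    Finset.card_le_mul_card_image s 2 hfib
  have himg : (s.image f).card ≤ ⌊ρ n / θ⌋₊ + 1 := by
    have hsub : s.image f ⊆ Finset.range (⌊ρ n / θ⌋₊ + 1) := by
      intro b hb
      rw [Finset.mem_image] at hb
      obtain ⟨i, hi, rfl⟩ := hb
      rw [Finset.mem_range, Nat.lt_succ_iff, hf]
      have hdiv : ρ (KK n ρ r i) / θ ≤ ρ n / θ := by
        gcongr
        exact hρn _ (KK_le n ρ r i)
      exact Nat.floor_le_floor hdiv
    calc (s.image f).card ≤ _ := Finset.card_le_card hsub
      _ = ⌊ρ n / θ⌋₊ + 1 := Finset.card_range _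
  have hfloor : (⌊ρ n / θ⌋₊ : ℝ) ≤ ρ n / θ :=
    Nat.floor_le (div_nonneg (hρ0 n le_rfl) hθ.le)
  have : (s.card : ℝ) ≤ 2 * ((⌊ρ n / θ⌋₊ : ℝ) + 1) := by
    have := hcard1.trans (Nat.mul_le_mul_left 2 himg)
    exact_mod_cast this
  linarith

end Greedy

section Hier

variable {V : Type} {G : SimpleGraph V} {w : V → V → ℝ}
variable {ℓ : ℕ} {A : ℕ → Set V} {p : ℕ → V → V}

open Classical in
noncomputable def cc (A : ℕ → Set V) (p : ℕ → V → V) : ℕ → V → V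
  | 0, z => z
  | j+1, z => if cc A p j z ∈ A (j+1) then cc A p j z else p (j+1) (cc A p j z)

open Classical in
lemma cc_succ (A : ℕ → Set V) (p : ℕ → V → V) (j : ℕ) (z : V) :
    cc A p (j+1) z = if cc A p j z ∈ A (j+1) then cc A p j z
      else p (j+1) (cc A p j z) := by
  rfl

/-- scale thresholds -/
noncomputable def TT (ℓ : ℕ) (ε D' : ℝ) (j : ℕ) : ℝ := ε ^ (ℓ - j) * D'

/-- partial sums of thresholds -/
noncomputable def SS (ℓ : ℕ) (ε D' : ℝ) (m : ℕ) : ℝ :=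
  ∑ j ∈ Finset.range m, TT ℓ ε D' (j + 1)

/-- the type (stuck level) of a vertex -/
noncomputable def tpy (G : SimpleGraph V) (w : V → V → ℝ) (ℓ : ℕ) (A : ℕ → Set V)
    (p : ℕ → V → V) (ε D' : ℝ) (z : V) : ℕ :=
  sInf {j | j = ℓ - 1 ∨ (j < ℓ - 1 ∧
    TT ℓ ε D' (j+1) < wdist G w (cc A p j z) (cc A p (j+1) z))}

/-- a single hop in `G ∪ H` -/
def IsHop (G : SimpleGraph V) (w : V → V → ℝ) (ℓ : ℕ) (A : ℕ → Set V)
    (p : ℕ → V → V) (x y : V) : Prop :=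
  G.Adj x y ∨ s(x, y) ∈ tzHopset G w ℓ A p

/-- there is a hop path from `x` to `v` of length at most `N` and cost at most `C`. -/
def Reach (G : SimpleGraph V) (w : V → V → ℝ) (ℓ : ℕ) (A : ℕ → Set V)
    (p : ℕ → V → V) (v x : V) (C : ℝ) (N : ℕ) : Prop :=
  ∃ (m : ℕ) (σ : ℕ → V), m ≤ N ∧ σ 0 = x ∧ σ m = v ∧
    (∀ j < m, IsHop G w ℓ A p (σ j) (σ (j+1))) ∧
    (∑ j ∈ Finset.range m, wdist G w (σ j) (σ (j+1))) ≤ C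

lemma isHop_symm {x y : V} (h : IsHop G w ℓ A p x y) : IsHop G w ℓ A p y x := by
  rcases h with h | h
  · exact Or.inl h.symm
  · right
    rwa [Sym2.eq_swap]

lemma reach_self (v : V) {C : ℝ} (hC : 0 ≤ C) (N : ℕ) : Reach G w ℓ A p v v C N := by
  exact ⟨0, fun _ => v, Nat.zero_le _, rfl, rfl, by omega, by simpa using hC⟩

lemma reach_mono {v x : V} {C C' : ℝ} {N N' : ℕ} (hC : C ≤ C') (hN : N ≤ N')
    (h : Reach G w ℓ A p v x C N) : Reach G w ℓ A p v x C' N' := by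
  obtain ⟨m, σ, h1, h2, h3, h4, h5⟩ := h
  exact ⟨m, σ, h1.trans hN, h2, h3, h4, h5.trans hC⟩

lemma reach_step (hconn : G.Connected) (hpos : ∀ x y : V, G.Adj x y → 0 < w x y)
    {v x y : V} {C c0 : ℝ} {N : ℕ}
    (h : IsHop G w ℓ A p x y ∨ x = y) (hcost : wdist G w x y ≤ c0)
    (hr : Reach G w ℓ A p v y C N) :
    Reach G w ℓ A p v x (c0 + C) (N + 1) := by
  have hc0 : 0 ≤ c0 := (wdist_nonneg hconn hpos x y).trans hcost
  rcases h with h | rfl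
  · obtain ⟨m, σ, h1, h2, h3, h4, h5⟩ := hr
    refine ⟨m + 1, fun j => if j = 0 then x else σ (j - 1), by omega, by simp, ?_, ?_, ?_⟩
    · simp [h3]
    · intro j hj
      rcases Nat.eq_zero_or_pos j with rfl | hj0
      · simpa [h2] using h
      · have hne : j ≠ 0 := by omega
        have hne2 : j + 1 ≠ 0 := by omega
        show IsHop G w ℓ A p (if j = 0 then x else σ (j - 1))
          (if j + 1 = 0 then x else σ (j + 1 - 1))
        rw [if_neg hne, if_neg hne2]
        simp only [Nat.add_sub_cancel]
        have hjj : j - 1 + 1 = j := by omega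
        have := h4 (j-1) (by omega)
        rwa [hjj] at this
    · rw [Finset.sum_range_succ']
      simp only [Nat.succ_ne_zero, if_false, Nat.add_sub_cancel, if_pos rfl]
      have hx : wdist G w (if True then x else σ (0 - 1)) (σ 0) ≤ c0 := by
        simp only [if_true, h2]; exact hcost
      linarith
  · exact reach_mono (by linarith) (by omega) hr

lemma TT_pos {ε D' : ℝ} (hε : 0 < ε) (hD' : 0 < D') (j : ℕ) : 0 < TT ℓ ε D' j :=
  mul_pos (pow_pos hε _) hD'

lemma SS_nonneg {ε D' : ℝ} (hε : 0 < ε) (hD' : 0 < D') (m : ℕ) : 0 ≤ SS ℓ ε D' m :=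
  Finset.sum_nonneg fun j _ => (TT_pos hε hD' (j+1)).le

lemma SS_mono {ε D' : ℝ} (hε : 0 < ε) (hD' : 0 < D') {a b : ℕ} (h : a ≤ b) :
    SS ℓ ε D' a ≤ SS ℓ ε D' b := by
  apply Finset.sum_le_sum_of_subset_of_nonneg (Finset.range_subset_range.2 h)
  intro j _ _
  exact (TT_pos hε hD' (j+1)).le

lemma cc_mem (hA0 : A 0 = Set.univ)
    (hpiv : ∀ i, 1 ≤ i → i ≤ ℓ - 1 → ∀ v : V,
      p i v ∈ A i ∧ ∀ z ∈ A i, wdist G w v (p i v) ≤ wdist G w v z)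
    {j : ℕ} (hj : j ≤ ℓ - 1) (z : V) : cc A p j z ∈ A j := by
  induction j with
  | zero => rw [hA0]; trivial
  | succ j ih =>
    rw [cc_succ]
    split
    · assumption
    · exact (hpiv (j+1) (by omega) hj _).1

lemma tpy_nonempty (z : V) :
    {j | j = ℓ - 1 ∨ (j < ℓ - 1 ∧
      TT ℓ ε D' (j+1) < wdist G w (cc A p j z) (cc A p (j+1) z))}.Nonempty :=
  ⟨ℓ - 1, Or.inl rfl⟩

lemma tpy_le {ε D' : ℝ} (z : V) : tpy G w ℓ A p ε D' z ≤ ℓ - 1 :=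
  Nat.sInf_le (Or.inl rfl)

lemma tpy_spec {ε D' : ℝ} (z : V) :
    tpy G w ℓ A p ε D' z = ℓ - 1 ∨ (tpy G w ℓ A p ε D' z < ℓ - 1 ∧
      TT ℓ ε D' (tpy G w ℓ A p ε D' z + 1) <
        wdist G w (cc A p (tpy G w ℓ A p ε D' z) z)
          (cc A p (tpy G w ℓ A p ε D' z + 1) z)) :=
  Nat.sInf_mem (tpy_nonempty z)

lemma cheap_step {ε D' : ℝ} {z : V} {j : ℕ} (hj : j < tpy G w ℓ A p ε D' z) :
    wdist G w (cc A p j z) (cc A p (j+1) z) ≤ TT ℓ ε D' (j+1) := by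
  have hnot := Nat.notMem_of_lt_sInf (hj.trans_le (le_refl _))
  rw [Set.mem_setOf_eq] at hnot
  push_neg at hnot
  have hjl : j < ℓ - 1 := lt_of_lt_of_le hj (tpy_le z)
  exact hnot.2 hjl

lemma fat_bunch (hconn : G.Connected) (hpos : ∀ x y : V, G.Adj x y → 0 < w x y)
    (hpiv : ∀ i, 1 ≤ i → i ≤ ℓ - 1 → ∀ v : V,
      p i v ∈ A i ∧ ∀ z ∈ A i, wdist G w v (p i v) ≤ wdist G w v z)
    {ε D' : ℝ} (hε : 0 < ε) (hD' : 0 < D') {z : V}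
    (h : tpy G w ℓ A p ε D' z < ℓ - 1) :
    cc A p (tpy G w ℓ A p ε D' z) z ∉ A (tpy G w ℓ A p ε D' z + 1) ∧
    ∀ y ∈ A (tpy G w ℓ A p ε D' z + 1),
      TT ℓ ε D' (tpy G w ℓ A p ε D' z + 1) < wdist G w (cc A p (tpy G w ℓ A p ε D' z) z) y := by
  set t := tpy G w ℓ A p ε D' z with ht
  rcases tpy_spec (G := G) (w := w) (ℓ := ℓ) (A := A) (p := p) (ε := ε) (D' := D') z with heq | ⟨hlt, hfat⟩
  · omega
  have hnotmem : cc A p t z ∉ A (t + 1) := by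
    intro hmem
    have : cc A p (t+1) z = cc A p t z := by
      rw [cc_succ, if_pos hmem]
    rw [this, wdist_self hconn hpos] at hfat
    exact absurd hfat (not_lt.2 (TT_pos hε hD' (t+1)).le)
  have hcc : cc A p (t+1) z = p (t+1) (cc A p t z) := by
    rw [cc_succ, if_neg hnotmem]
  refine ⟨hnotmem, fun y hy => ?_⟩
  rw [hcc] at hfat
  calc TT ℓ ε D' (t+1) < wdist G w (cc A p t z) (p (t+1) (cc A p t z)) := hfat
    _ ≤ wdist G w (cc A p t z) y := (hpiv (t+1) (by omega) (by omega) _).2 y hy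

lemma drift (hconn : G.Connected) (hpos : ∀ x y : V, G.Adj x y → 0 < w x y)
    {ε D' : ℝ} {z : V} {m : ℕ} (hm : m ≤ tpy G w ℓ A p ε D' z) :
    wdist G w z (cc A p m z) ≤ SS ℓ ε D' m := by
  induction m with
  | zero =>
    show wdist G w z z ≤ SS ℓ ε D' 0
    rw [wdist_self hconn hpos]
    simp [SS]
  | succ m ih =>
    have h1 := ih (by omega)
    have h2 := cheap_step (G := G) (w := w) (ℓ := ℓ) (A := A) (p := p) (ε := ε) (D' := D') (z := z) (j := m) (by omega)
    have h3 := wdist_triangle hconn hpos z (cc A p m z) (cc A p (m+1) z)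
    have : SS ℓ ε D' (m+1) = SS ℓ ε D' m + TT ℓ ε D' (m+1) := by
      rw [SS, SS, Finset.sum_range_succ]
    linarith

lemma chain_step_hop (hpiv : ∀ i, 1 ≤ i → i ≤ ℓ - 1 → ∀ v : V,
      p i v ∈ A i ∧ ∀ z ∈ A i, wdist G w v (p i v) ≤ wdist G w v z)
    (hA0 : A 0 = Set.univ)
    {ε D' : ℝ} {z : V} {j : ℕ} (hj : j < tpy G w ℓ A p ε D' z) :
    IsHop G w ℓ A p (cc A p j z) (cc A p (j+1) z) ∨ cc A p (j+1) z = cc A p j z := by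
  classical
  have hjl : j < ℓ - 1 := lt_of_lt_of_le hj (tpy_le z)
  by_cases hmem : cc A p j z ∈ A (j+1)
  · right
    rw [cc_succ, if_pos hmem]
  · left
    right
    have hcc : cc A p (j+1) z = p (j+1) (cc A p j z) := by
      rw [cc_succ, if_neg hmem]
    rw [hcc]
    refine ⟨cc A p j z, p (j+1) (cc A p j z), ?_, rfl, Or.inl ⟨j, by omega,
      cc_mem hA0 hpiv (by omega) z, hmem, Or.inr rfl⟩⟩
    intro heq
    exact hmem (heq ▸ (hpiv (j+1) (by omega) (by omega) _).1)

lemma reach_chain_down (hconn : G.Connected) (hpos : ∀ x y : V, G.Adj x y → 0 < w x y)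
    (hA0 : A 0 = Set.univ)
    (hpiv : ∀ i, 1 ≤ i → i ≤ ℓ - 1 → ∀ v : V,
      p i v ∈ A i ∧ ∀ z ∈ A i, wdist G w v (p i v) ≤ wdist G w v z)
    {ε D' : ℝ} {v z : V} (d : ℕ) :
    ∀ (a : ℕ) (C : ℝ) (N : ℕ), a + d ≤ tpy G w ℓ A p ε D' z →
    Reach G w ℓ A p v (cc A p (a + d) z) C N →
    Reach G w ℓ A p v (cc A p a z)
      (C + ∑ j ∈ Finset.Ico a (a + d), TT ℓ ε D' (j+1)) (N + d) := by
  induction d with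
  | zero =>
    intro a C N _ hr
    simpa using hr
  | succ d ih =>
    intro a C N hd hr
    have hstep := chain_step_hop (G := G) (w := w) (ℓ := ℓ) (A := A) (p := p)
      hpiv hA0 (ε := ε) (D' := D') (z := z) (j := a) (by omega)
    have hcost := cheap_step (G := G) (w := w) (ℓ := ℓ) (A := A) (p := p)
      (ε := ε) (D' := D') (z := z) (j := a) (by omega)
    have hr' : Reach G w ℓ A p v (cc A p ((a+1) + d) z) C N := by
      have h : (a+1) + d = a + (d+1) := by omega
      rwa [h]
    have hih := ih (a+1) C N (by omega) hr'
    have hstep' : IsHop G w ℓ A p (cc A p a z) (cc A p (a+1) z) ∨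
        cc A p a z = cc A p (a+1) z := by
      rcases hstep with h | h
      · exact Or.inl h
      · exact Or.inr h.symm
    have hres := reach_step hconn hpos hstep' hcost hih
    have hco : TT ℓ ε D' (a+1) + (C + ∑ j ∈ Finset.Ico (a+1) ((a+1) + d), TT ℓ ε D' (j+1))
        = C + ∑ j ∈ Finset.Ico a (a + (d+1)), TT ℓ ε D' (j+1) := by
      have hab : a < a + (d+1) := by omega
      rw [Finset.sum_eq_sum_Ico_succ_bot hab]
      have h : a + (d+1) = (a+1) + d := by omega
      rw [h]
      ring
    rw [hco] at hres
    exact reach_mono le_rfl (by omega) hres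

lemma reach_chain_up (hconn : G.Connected) (hsymm : ∀ x y : V, w x y = w y x)
    (hpos : ∀ x y : V, G.Adj x y → 0 < w x y)
    (hA0 : A 0 = Set.univ)
    (hpiv : ∀ i, 1 ≤ i → i ≤ ℓ - 1 → ∀ v : V,
      p i v ∈ A i ∧ ∀ z ∈ A i, wdist G w v (p i v) ≤ wdist G w v z)
    {ε D' : ℝ} {v z : V} {C : ℝ} {N : ℕ} (a d : ℕ)
    (hd : a + d ≤ tpy G w ℓ A p ε D' z)
    (hr : Reach G w ℓ A p v (cc A p a z) C N) :
    Reach G w ℓ A p v (cc A p (a + d) z)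
      (C + ∑ j ∈ Finset.Ico a (a + d), TT ℓ ε D' (j+1)) (N + d) := by
  induction d with
  | zero => simpa using hr
  | succ d ih =>
    have hih := ih (by omega)
    have hstep := chain_step_hop (G := G) (w := w) (ℓ := ℓ) (A := A) (p := p)
      hpiv hA0 (ε := ε) (D' := D') (z := z) (j := a + d) (by omega)
    have hcost := cheap_step (G := G) (w := w) (ℓ := ℓ) (A := A) (p := p)
      (ε := ε) (D' := D') (z := z) (j := a + d) (by omega)
    have hcost' : wdist G w (cc A p (a + d + 1) z) (cc A p (a + d) z)
        ≤ TT ℓ ε D' (a + d + 1) := by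
      rw [← wdist_symm hconn hsymm hpos]
      exact hcost
    have hstep' : IsHop G w ℓ A p (cc A p (a + d + 1) z) (cc A p (a + d) z) ∨
        cc A p (a + d + 1) z = cc A p (a + d) z := by
      rcases hstep with h | h
      · exact Or.inl (isHop_symm h)
      · exact Or.inr h
    have hres := reach_step hconn hpos hstep' hcost' hih
    have hco : TT ℓ ε D' (a + d + 1) + (C + ∑ j ∈ Finset.Ico a (a + d), TT ℓ ε D' (j+1))
        = C + ∑ j ∈ Finset.Ico a (a + (d+1)), TT ℓ ε D' (j+1) := by
      have h : a + (d+1) = (a + d) + 1 := by omega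
      rw [h, Finset.sum_Ico_succ_top (by omega : a ≤ a + d)]
      ring
    rw [hco] at hres
    exact reach_mono le_rfl (by omega) hres

lemma reach_shift (hconn : G.Connected) (hsymm : ∀ x y : V, w x y = w y x)
    (hpos : ∀ x y : V, G.Adj x y → 0 < w x y)
    (hA0 : A 0 = Set.univ)
    (hpiv : ∀ i, 1 ≤ i → i ≤ ℓ - 1 → ∀ v : V,
      p i v ∈ A i ∧ ∀ z ∈ A i, wdist G w v (p i v) ≤ wdist G w v z)
    {ε D' : ℝ} (hε : 0 < ε) (hD' : 0 < D') {v z : V} {C : ℝ} {N : ℕ} (a b : ℕ)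
    (ha : a ≤ tpy G w ℓ A p ε D' z) (hb : b ≤ tpy G w ℓ A p ε D' z)
    (hr : Reach G w ℓ A p v (cc A p b z) C N) :
    Reach G w ℓ A p v (cc A p a z) (C + SS ℓ ε D' (max a b)) (N + ℓ) := by
  have htpyle : tpy G w ℓ A p ε D' z ≤ ℓ - 1 :=
    tpy_le (G := G) (w := w) (ℓ := ℓ) (A := A) (p := p) (ε := ε) (D' := D') z
  have hIcoSS : ∀ x y : ℕ, x ≤ y → y ≤ max a b →
      ∑ j ∈ Finset.Ico x y, TT ℓ ε D' (j+1) ≤ SS ℓ ε D' (max a b) := by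
    intro x y _ hy
    have hsub : Finset.Ico x y ⊆ Finset.range (max a b) := by
      intro q hq
      rw [Finset.mem_Ico] at hq
      rw [Finset.mem_range]
      omega
    rw [SS]
    apply Finset.sum_le_sum_of_subset_of_nonneg hsub
    intro j _ _
    exact (TT_pos hε hD' (j+1)).le
  rcases le_or_gt a b with hab | hab
  · have hr' : Reach G w ℓ A p v (cc A p (a + (b - a)) z) C N := by
      rwa [show a + (b - a) = b by omega]
    have hres := reach_chain_down (G := G) (w := w) (ℓ := ℓ) (A := A) (p := p)
      hconn hpos hA0 hpiv (ε := ε) (D' := D') (v := v) (z := z) (b - a) a C N (by omega) hr'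
    have h1 : ∑ j ∈ Finset.Ico a (a + (b - a)), TT ℓ ε D' (j+1) ≤ SS ℓ ε D' (max a b) :=
      hIcoSS a (a + (b - a)) (by omega) (by omega)
    exact reach_mono (by linarith) (by omega) hres
  · have hres := reach_chain_up (G := G) (w := w) (ℓ := ℓ) (A := A) (p := p)
      hconn hsymm hpos hA0 hpiv (ε := ε) (D' := D') (v := v) (z := z) b (a - b) (by omega) hr
    rw [show b + (a - b) = a by omega] at hres
    have h1 : ∑ j ∈ Finset.Ico b a, TT ℓ ε D' (j+1) ≤ SS ℓ ε D' (max a b) :=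
      hIcoSS b a (by omega) (by omega)
    exact reach_mono (by linarith) (by omega) hres

lemma SS_le (hℓ : 2 ≤ ℓ) {ε D' : ℝ} (hε : 0 < ε) (hε6 : ε ≤ 1/6) (hD' : 0 < D')
    {m : ℕ} (hm : m ≤ ℓ - 1) : SS ℓ ε D' m ≤ (6/5) * TT ℓ ε D' m := by
  induction m with
  | zero =>
    have := TT_pos (ℓ := ℓ) hε hD' 0
    simp only [SS, Finset.range_zero, Finset.sum_empty]
    linarith
  | succ m ih =>
    have h1 : SS ℓ ε D' m ≤ (6/5) * TT ℓ ε D' m := ih (by omega)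
    have hTT : TT ℓ ε D' m = ε * TT ℓ ε D' (m+1) := by
      rw [TT, TT, ← mul_assoc, ← pow_succ']
      congr 2
      omega
    have h2 : SS ℓ ε D' (m+1) = SS ℓ ε D' m + TT ℓ ε D' (m+1) := by
      rw [SS, SS, Finset.sum_range_succ]
    have h3 : 0 < TT ℓ ε D' (m+1) := TT_pos hε hD'  _
    have hTT' : TT ℓ ε D' (m+1) = ε * TT ℓ ε D' (m+1+1) := by
      rw [TT, TT, ← mul_assoc, ← pow_succ']
      congr 2
      omega
    nlinarith

lemma tt_eq_top_of_min {a b : ℕ} (ha : a ≤ ℓ - 1) (hb : b ≤ ℓ - 1)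
    (h : min a b = ℓ - 1) : a = ℓ - 1 ∧ b = ℓ - 1 := by
  omega

lemma jump_hop (hconn : G.Connected) (hsymm : ∀ x y : V, w x y = w y x)
    (hpos : ∀ x y : V, G.Adj x y → 0 < w x y)
    (hℓ : 2 ≤ ℓ) (hA0 : A 0 = Set.univ)
    (hpiv : ∀ i, 1 ≤ i → i ≤ ℓ - 1 → ∀ v : V,
      p i v ∈ A i ∧ ∀ z ∈ A i, wdist G w v (p i v) ≤ wdist G w v z)
    {ε D' : ℝ} (hε : 0 < ε) (hD' : 0 < D') {x y : V} {Δ : ℝ} {m : ℕ}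
    (hm : m = min (tpy G w ℓ A p ε D' x) (tpy G w ℓ A p ε D' y))
    (hxy : wdist G w x y ≤ Δ)
    (hcase : m = ℓ - 1 ∨ (m < ℓ - 1 ∧ 2 * SS ℓ ε D' m + Δ < TT ℓ ε D' (m+1))) :
    (IsHop G w ℓ A p (cc A p m x) (cc A p m y) ∨ cc A p m x = cc A p m y) ∧
      wdist G w (cc A p m x) (cc A p m y) ≤ 2 * SS ℓ ε D' m + Δ := by
  have htax : m ≤ tpy G w ℓ A p ε D' x := by rw [hm]; exact min_le_left _ _
  have htay : m ≤ tpy G w ℓ A p ε D' y := by rw [hm]; exact min_le_right _ _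
  have hdx : wdist G w x (cc A p m x) ≤ SS ℓ ε D' m := drift hconn hpos htax
  have hdy : wdist G w y (cc A p m y) ≤ SS ℓ ε D' m := drift hconn hpos htay
  have hcost : wdist G w (cc A p m x) (cc A p m y) ≤ 2 * SS ℓ ε D' m + Δ := by
    have t1 := wdist_triangle hconn hpos (cc A p m x) x (cc A p m y)
    have t2 := wdist_triangle hconn hpos x y (cc A p m y)
    have hsx : wdist G w (cc A p m x) x = wdist G w x (cc A p m x) :=
      wdist_symm hconn hsymm hpos _ _
    linarith
  refine ⟨?_, hcost⟩
  by_cases heq : cc A p m x = cc A p m y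
  · exact Or.inr heq
  left
  have htlx := tpy_le (G := G) (w := w) (ℓ := ℓ) (A := A) (p := p) (ε := ε) (D' := D') x
  have htly := tpy_le (G := G) (w := w) (ℓ := ℓ) (A := A) (p := p) (ε := ε) (D' := D') y
  rcases hcase with htop | ⟨hmlt, hnear⟩
  · -- top level clique
    have hboth : tpy G w ℓ A p ε D' x = ℓ - 1 ∧ tpy G w ℓ A p ε D' y = ℓ - 1 := by
      constructor <;> omega
    have hx1 : cc A p m x ∈ A (ℓ - 1) := htop ▸ cc_mem hA0 hpiv (le_of_eq htop) x
    have hy1 : cc A p m y ∈ A (ℓ - 1) := htop ▸ cc_mem hA0 hpiv (le_of_eq htop) y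
    right
    exact ⟨cc A p m x, cc A p m y, fun h => heq h.symm, rfl, Or.inr ⟨hx1, hy1⟩⟩
  · -- bunch hop from fat side
    have hm2 : m ≤ ℓ - 2 := by omega
    have hwlt : wdist G w (cc A p m x) (cc A p m y) < TT ℓ ε D' (m+1) :=
      lt_of_le_of_lt hcost hnear
    right
    rcases le_or_gt (tpy G w ℓ A p ε D' x) (tpy G w ℓ A p ε D' y) with hmin | hmin
    · -- x side is fat
      have htx : tpy G w ℓ A p ε D' x = m := by omega
      have hfat := fat_bunch hconn hpos hpiv hε hD' (z := x) (by omega)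
      rw [htx] at hfat
      refine ⟨cc A p m x, cc A p m y, fun h => heq h.symm, rfl, Or.inl
        ⟨m, hm2, cc_mem hA0 hpiv (by omega) x, hfat.1, Or.inl
          ⟨cc_mem hA0 hpiv (by omega) y, fun z' hz' => ?_⟩⟩⟩
      exact lt_trans hwlt (hfat.2 z' hz')
    · -- y side is fat
      have hty : tpy G w ℓ A p ε D' y = m := by omega
      have hfat := fat_bunch hconn hpos hpiv hε hD' (z := y) (by omega)
      rw [hty] at hfat
      have hwlt' : wdist G w (cc A p m y) (cc A p m x) < TT ℓ ε D' (m+1) := by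
        rwa [← wdist_symm hconn hsymm hpos]
      refine ⟨cc A p m y, cc A p m x, fun h => heq h, Sym2.eq_swap.symm, Or.inl
        ⟨m, hm2, cc_mem hA0 hpiv (by omega) y, hfat.1, Or.inl
          ⟨cc_mem hA0 hpiv (by omega) x, fun z' hz' => ?_⟩⟩⟩
      exact lt_trans hwlt' (hfat.2 z' hz')

end Hier

end TZP


set_option maxHeartbeats 2000000 in
/-- **Deterministic hopset stretch and hopbound for an arbitrary hierarchy.**
There is an absolute constant `c ≥ 1` such that for every Thorup–Zwick hierarchy over a
finite connected weighted graph `G`, every `0 < ε < 1/6` and all vertices `u, v`, there is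
an `m`-hop path from `u` to `v` in `G ∪ H` with `m ≤ c·ℓ·⌈ε^(-(ℓ-1))⌉` and length at most
`(1 + c·ℓ·ε)·d_G(u,v)`. -/
theorem hopset_deterministic_stretch_and_hopbound :
    ∃ c : ℝ, 1 ≤ c ∧
      ∀ (V : Type) [Fintype V] (G : SimpleGraph V) (w : V → V → ℝ),
        G.Connected →
        (∀ x y : V, w x y = w y x) →
        (∀ x y : V, G.Adj x y → 0 < w x y) →
      ∀ ℓ : ℕ, 2 ≤ ℓ →
      ∀ A : ℕ → Set V,
        A 0 = Set.univ → A ℓ = ∅ → (∀ i, A (i + 1) ⊆ A i) →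
        (∀ i ≤ ℓ - 1, (A i).Nonempty) →
      ∀ p : ℕ → V → V,
        (∀ i, 1 ≤ i → i ≤ ℓ - 1 → ∀ v : V,
          p i v ∈ A i ∧ ∀ z ∈ A i, wdist G w v (p i v) ≤ wdist G w v z) →
      ∀ ε : ℝ, 0 < ε → ε < 1 / 6 →
      ∀ u v : V,
        ∃ (m : ℕ) (σ : ℕ → V), σ 0 = u ∧ σ m = v ∧
          (m : ℝ) ≤ c * (ℓ : ℝ) * (⌈(1 / ε) ^ (ℓ - 1)⌉₊ : ℝ) ∧
          (∀ j < m,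
            G.Adj (σ j) (σ (j + 1)) ∨ s(σ j, σ (j + 1)) ∈ tzHopset G w ℓ A p) ∧
          ∑ j ∈ Finset.range m, wdist G w (σ j) (σ (j + 1)) ≤
            (1 + c * (ℓ : ℝ) * ε) * wdist G w u v := by
  classical
  refine ⟨1000, by norm_num, ?_⟩
  intro V _ G w hconn hsymm hpos ℓ hℓ A hA0 hAl hAsub hAne piv hpiv ε hε hε6 u v
  open TZP in
  by_cases huv : u = v
  · subst huv
    refine ⟨0, fun _ => u, rfl, rfl, ?_, ?_, ?_⟩
    · simp only [Nat.cast_zero]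
      positivity
    · intro j hj
      exact absurd hj (Nat.not_lt_zero j)
    · rw [TZP.wdist_self hconn hpos]
      simp
  -- main case
  have hDpos : 0 < wdist G w u v := TZP.wdist_pos hconn hpos huv
  set D : ℝ := wdist G w u v with hD
  have hη : 0 < ε * D := mul_pos hε hDpos
  obtain ⟨pw, hpw⟩ := TZP.exists_walk_lt (w := w) hconn (u := u) (v := v) hη
  set n : ℕ := pw.length with hn
  set ζ : ℕ → V := fun k => pw.getVert k with hζ
  set D' : ℝ := walkWeight w pw with hD'
  have hDle : D ≤ D' := TZP.wdist_le_walkWeight hpos pw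
  have hD'pos : 0 < D' := lt_of_lt_of_le hDpos hDle
  have hD'lt : D' ≤ (1 + ε) * D := by nlinarith
  have hε1 : ε ≤ 1 := by linarith
  set ρ : ℕ → ℝ := fun k => ∑ i ∈ Finset.range k, w (ζ i) (ζ (i+1)) with hρ
  have hρ0 : ρ 0 = 0 := by simp [hρ]
  have hadj : ∀ k, k < n → G.Adj (ζ k) (ζ (k+1)) := fun k hk => pw.adj_getVert_succ hk
  have hρn : ρ n = D' := (TZP.walkWeight_eq_sum pw).symm
  have hρstep : ∀ k, ρ (k+1) = ρ k + w (ζ k) (ζ (k+1)) := by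
    intro k
    simp [hρ, Finset.sum_range_succ]
  have hρmono : ∀ b, b ≤ n → ∀ a, a ≤ b → ρ a ≤ ρ b := by
    intro b
    induction b with
    | zero =>
      intro _ a ha
      have : a = 0 := by omega
      simp [this]
    | succ b ih =>
      intro hbn a hab
      rcases Nat.eq_or_lt_of_le hab with rfl | h
      · exact le_rfl
      · have h1 := ih (by omega) a (by omega)
        have h2 : 0 < w (ζ b) (ζ (b+1)) := hpos _ _ (hadj b (by omega))
        rw [hρstep b] at *
        linarith
  have hwdle : ∀ b, b ≤ n → ∀ a, a ≤ b → wdist G w (ζ a) (ζ b) ≤ ρ b - ρ a := by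
    intro b
    induction b with
    | zero =>
      intro _ a ha
      have : a = 0 := by omega
      subst this
      rw [TZP.wdist_self hconn hpos]
      simp
    | succ b ih =>
      intro hbn a hab
      rcases Nat.eq_or_lt_of_le hab with rfl | h
      · rw [TZP.wdist_self hconn hpos]
        simp
      · have h1 := ih (by omega) a (by omega)
        have h2 : wdist G w (ζ b) (ζ (b+1)) ≤ w (ζ b) (ζ (b+1)) :=
          TZP.wdist_le_of_adj hpos (hadj b (by omega))
        have h3 := TZP.wdist_triangle hconn hpos (ζ a) (ζ b) (ζ (b+1))
        rw [hρstep b]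
        linarith
  have hζ0 : ζ 0 = u := pw.getVert_zero
  have hζn : ζ n = v := pw.getVert_length
  have hn0 : n ≠ 0 := by
    intro h
    apply huv
    rw [← hζ0, ← hζn, h]
  set tt : ℕ → V → ℕ := fun _ z => tpy G w ℓ A piv ε D' z with htt
  set VV : ℕ → ℝ := fun t => if t = 0 then 0 else if ℓ ≤ t then 2 * D'
    else TT ℓ ε D' t / 2 with hVV
  set rr : ℕ → ℝ := fun k => VV (tpy G w ℓ A piv ε D' (ζ k) + 1) with hrr
  have hTTmono : ∀ s t : ℕ, s ≤ t → TT ℓ ε D' s ≤ TT ℓ ε D' t := by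
    intro s t hst
    rw [TZP.TT, TZP.TT]
    have : ε ^ (ℓ - s) ≤ ε ^ (ℓ - t) := by
      apply pow_le_pow_of_le_one hε.le hε1
      omega
    nlinarith
  have hTTstrict : ∀ s t : ℕ, s < t → t ≤ ℓ → TT ℓ ε D' s < TT ℓ ε D' t := by
    intro s t hst htl
    rw [TZP.TT, TZP.TT]
    have : ε ^ (ℓ - s) < ε ^ (ℓ - t) := by
      apply pow_lt_pow_right_of_lt_one₀ hε (by linarith)
      omega
    nlinarith
  have hTTleD' : ∀ t : ℕ, TT ℓ ε D' t ≤ D' := by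
    intro t
    rw [TZP.TT]
    have h1 : ε ^ (ℓ - t) ≤ 1 := pow_le_one₀ hε.le hε1
    nlinarith
  have hVVpos : ∀ t : ℕ, 1 ≤ t → 0 < VV t := by
    intro t ht
    rw [hVV]
    simp only
    rw [if_neg (by omega)]
    split
    · linarith
    · have := TZP.TT_pos (ℓ := ℓ) hε hD'pos t
      linarith
  have hVVmono : ∀ s t : ℕ, s ≤ t → t ≤ ℓ → VV s ≤ VV t := by
    intro s t hst htl
    rcases Nat.eq_or_lt_of_le hst with rfl | hlt
    · exact le_rfl
    rw [hVV]
    simp only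
    rcases Nat.eq_zero_or_pos s with rfl | hs
    · rw [if_pos rfl]
      exact (hVVpos t (by omega)).le
    rw [if_neg (by omega), if_neg (by omega)]
    by_cases htℓ : ℓ ≤ t
    · rw [if_pos htℓ]
      split
      · linarith
      · have := hTTleD' s
        linarith
    · rw [if_neg htℓ, if_neg (by omega)]
      have := hTTmono s t (by omega)
      linarith
  have hVVstrict : ∀ s t : ℕ, s < t → t ≤ ℓ → VV s < VV t := by
    intro s t hst htl
    rw [hVV]
    simp only
    rcases Nat.eq_zero_or_pos s with rfl | hs
    · rw [if_pos rfl]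
      have := hVVpos t (by omega)
      rw [hVV] at this
      simpa using this
    rw [if_neg (by omega), if_neg (by omega)]
    by_cases htℓ : ℓ ≤ t
    · rw [if_pos htℓ]
      rw [if_neg (by omega)]
      have := hTTleD' s
      have := TZP.TT_pos (ℓ := ℓ) hε hD'pos s
      linarith
    · rw [if_neg htℓ, if_neg (by omega)]
      have := hTTstrict s t hst (by omega)
      linarith
  have hVV_ge_TT : ∀ t : ℕ, 1 ≤ t → t ≤ ℓ → TT ℓ ε D' t / 2 ≤ VV t := by
    intro t h1 h2
    rw [hVV]
    simp only
    rw [if_neg (by omega)]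
    split
    · have := hTTleD' t
      linarith
    · linarith
  -- greedy construction
  have hex := TZP.exists_KK_eq n ρ rr
  set M : ℕ := Nat.find hex with hMdef
  have hKM : TZP.KK n ρ rr M = n := Nat.find_spec hex
  have hKlt : ∀ i < M, TZP.KK n ρ rr i ≠ n := fun i hi => Nat.find_min hex hi
  set K : ℕ → ℕ := TZP.KK n ρ rr with hK
  have hKle : ∀ i, K i ≤ n := fun i => TZP.KK_le n ρ rr i
  have hKltn : ∀ i, i < M → K i < n := fun i hi => TZP.KK_lt_n n ρ rr hKlt hi
  have hKstrict : ∀ i, i < M → K i < K (i+1) := fun i hi => TZP.KK_strict n ρ rr hKlt hi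
  have hK0 : K 0 = 0 := rfl
  have hM0 : 1 ≤ M := by
    rcases Nat.eq_zero_or_pos M with h | h
    · exfalso
      apply hn0
      rw [← hKM, h, hK]
      rfl
    · exact h
  have hedge : ∀ i, i < M → ¬ TZP.jv ρ rr (K i) (K (i+1)) → K (i+1) = K i + 1 := by
    intro i hi hnjv
    have hsp := TZP.mv_spec n ρ rr (hKltn i hi)
    have hKsucc : K (i+1) = TZP.mv n ρ rr (K i) := by
      rw [hK, TZP.KK_succ, if_pos (hKltn i hi)]
    rcases hsp.2.2 with h | h
    · rw [hKsucc, h]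
    · exfalso
      apply hnjv
      rwa [hKsucc]
  set mlev : ℕ → ℕ := fun i => if TZP.jv ρ rr (K i) (K (i+1)) then
      min (tpy G w ℓ A piv ε D' (ζ (K i))) (tpy G w ℓ A piv ε D' (ζ (K (i+1)))) else 0
    with hmlev
  set ee : ℕ → ℕ := fun i => Nat.rec 0 (fun j _ => mlev j) i with hee
  have hee0 : ee 0 = 0 := rfl
  have heesucc : ∀ j, ee (j+1) = mlev j := fun j => rfl
  have hmlev_le : ∀ i, mlev i ≤ tpy G w ℓ A piv ε D' (ζ (K i)) := by
    intro i
    rw [hmlev]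
    dsimp only
    split
    · exact min_le_left _ _
    · exact Nat.zero_le _
  have hmlev_le' : ∀ i, mlev i ≤ tpy G w ℓ A piv ε D' (ζ (K (i+1))) := by
    intro i
    rw [hmlev]
    dsimp only
    split
    · exact min_le_right _ _
    · exact Nat.zero_le _
  have hmlev_top : ∀ i, mlev i ≤ ℓ - 1 := fun i =>
    le_trans (hmlev_le i) (TZP.tpy_le _)
  have hee_le : ∀ i, ee i ≤ tpy G w ℓ A piv ε D' (ζ (K i)) := by
    intro i
    cases i with
    | zero => exact Nat.zero_le _
    | succ j => exact hmlev_le' j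
  have hSS0 : SS ℓ ε D' 0 = 0 := by simp [TZP.SS]
  set oh : ℕ → ℝ := fun i => SS ℓ ε D' (max (ee i) (mlev i)) + 2 * SS ℓ ε D' (mlev i)
    with hoh
  have hmove : ∀ i, i < M → ∀ (C : ℝ) (N : ℕ),
      TZP.Reach G w ℓ A piv v (cc A piv (mlev i) (ζ (K (i+1)))) C N →
      TZP.Reach G w ℓ A piv v (cc A piv (ee i) (ζ (K i)))
        (C + (ρ (K (i+1)) - ρ (K i)) + oh i) (N + (2*ℓ+1)) := by
    intro i hi C N hr
    by_cases hjv : TZP.jv ρ rr (K i) (K (i+1))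
    · have hmeq : mlev i = min (tpy G w ℓ A piv ε D' (ζ (K i)))
          (tpy G w ℓ A piv ε D' (ζ (K (i+1)))) := by
        simp only [hmlev]
        rw [if_pos hjv]
      have hΔle : wdist G w (ζ (K i)) (ζ (K (i+1))) ≤ ρ (K (i+1)) - ρ (K i) :=
        hwdle (K (i+1)) (hKle _) (K i) (hKstrict i hi).le
      have hcase : mlev i = ℓ - 1 ∨ (mlev i < ℓ - 1 ∧
          2 * SS ℓ ε D' (mlev i) + (ρ (K (i+1)) - ρ (K i)) < TT ℓ ε D' (mlev i + 1)) := by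
        by_cases htop : mlev i = ℓ - 1
        · exact Or.inl htop
        right
        have hmlt : mlev i < ℓ - 1 := lt_of_le_of_ne (hmlev_top i) htop
        refine ⟨hmlt, ?_⟩
        have h1 : ρ (K (i+1)) - ρ (K i) < min (rr (K i)) (rr (K (i+1))) := hjv
        have hm1ℓ : mlev i + 1 < ℓ := by omega
        have hVVeq : VV (mlev i + 1) = TT ℓ ε D' (mlev i + 1) / 2 := by
          rw [hVV]
          dsimp only
          rw [if_neg (by omega), if_neg (by omega)]
        have hminrr : min (rr (K i)) (rr (K (i+1))) ≤ TT ℓ ε D' (mlev i + 1) / 2 := by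
          rcases le_total (tpy G w ℓ A piv ε D' (ζ (K i)))
            (tpy G w ℓ A piv ε D' (ζ (K (i+1)))) with hc | hc
          · calc min (rr (K i)) (rr (K (i+1))) ≤ rr (K i) := min_le_left _ _
              _ = VV (tpy G w ℓ A piv ε D' (ζ (K i)) + 1) := by rw [hrr]
              _ = VV (mlev i + 1) := by rw [hmeq, min_eq_left hc]
              _ = TT ℓ ε D' (mlev i + 1) / 2 := hVVeq
          · calc min (rr (K i)) (rr (K (i+1))) ≤ rr (K (i+1)) := min_le_right _ _
              _ = VV (tpy G w ℓ A piv ε D' (ζ (K (i+1))) + 1) := by rw [hrr]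
              _ = VV (mlev i + 1) := by rw [hmeq, min_eq_right hc]
              _ = TT ℓ ε D' (mlev i + 1) / 2 := hVVeq
        have hSSm : SS ℓ ε D' (mlev i) ≤ (6/5) * TT ℓ ε D' (mlev i) :=
          TZP.SS_le hℓ hε (by linarith) hD'pos (hmlev_top i)
        have hTTid : TT ℓ ε D' (mlev i) = ε * TT ℓ ε D' (mlev i + 1) := by
          rw [TZP.TT, TZP.TT, ← mul_assoc, ← pow_succ']
          congr 2
          omega
        have hTTp := TZP.TT_pos (ℓ := ℓ) hε hD'pos (mlev i + 1)
        nlinarith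
      obtain ⟨hhop, hcost⟩ := TZP.jump_hop hconn hsymm hpos hℓ hA0 hpiv hε hD'pos
        (x := ζ (K i)) (y := ζ (K (i+1))) (Δ := ρ (K (i+1)) - ρ (K i)) (m := mlev i)
        hmeq hΔle hcase
      have hstep := TZP.reach_step hconn hpos hhop hcost hr
      have hshift := TZP.reach_shift hconn hsymm hpos hA0 hpiv hε hD'pos
        (ee i) (mlev i) (hee_le i) (hmlev_le i) hstep
      apply TZP.reach_mono (le_of_eq ?_) (by omega) hshift
      rw [hoh]
      dsimp only
      ring
    · have hm0 : mlev i = 0 := by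
        simp only [hmlev]
        rw [if_neg hjv]
      have hE : K (i+1) = K i + 1 := hedge i hi hjv
      have hadj' : G.Adj (ζ (K i)) (ζ (K i + 1)) := hadj _ (hKltn i hi)
      have hΔeq : ρ (K (i+1)) - ρ (K i) = w (ζ (K i)) (ζ (K i + 1)) := by
        rw [hE, hρstep]
        ring
      have hwd1 : wdist G w (ζ (K i)) (ζ (K i + 1)) ≤ ρ (K (i+1)) - ρ (K i) := by
        rw [hΔeq]
        exact TZP.wdist_le_of_adj hpos hadj'
      have hr' : TZP.Reach G w ℓ A piv v (ζ (K i + 1)) C N := by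
        rw [hm0] at hr
        rw [← hE]
        exact hr
      have hstep := TZP.reach_step hconn hpos (Or.inl (Or.inl hadj')) hwd1 hr'
      have hshift := TZP.reach_shift hconn hsymm hpos hA0 hpiv hε hD'pos
        (ee i) 0 (hee_le i) (Nat.zero_le _) hstep
      apply TZP.reach_mono (le_of_eq ?_) (by omega) hshift
      rw [hoh]
      dsimp only
      rw [hm0, hSS0]
      ring
  have hbase : TZP.Reach G w ℓ A piv v (cc A piv (ee M) (ζ (K M)))
      (0 + SS ℓ ε D' (max (ee M) 0)) (0 + ℓ) := by
    have hccv : cc A piv 0 (ζ (K M)) = v := by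
      show ζ (K M) = v
      rw [hKM]
      exact hζn
    have hself : TZP.Reach G w ℓ A piv v (cc A piv 0 (ζ (K M))) 0 0 := by
      rw [hccv]
      exact TZP.reach_self v le_rfl 0
    exact TZP.reach_shift hconn hsymm hpos hA0 hpiv hε hD'pos (ee M) 0
      (hee_le M) (Nat.zero_le _) hself
  have hP : ∀ d, d ≤ M →
      TZP.Reach G w ℓ A piv v (cc A piv (ee (M - d)) (ζ (K (M - d))))
        ((ρ n - ρ (K (M - d))) + (∑ j ∈ Finset.Ico (M - d) M, oh j)
          + SS ℓ ε D' (max (ee M) 0))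
        ((M - (M - d)) * (2*ℓ+1) + ℓ) := by
    intro d
    induction d with
    | zero =>
      intro _
      rw [Nat.sub_zero, Nat.sub_self]
      have h1 : ρ n - ρ (K M) = 0 := by rw [hKM, sub_self]
      have h2 : (Finset.Ico M M) = ∅ := Finset.Ico_self M
      rw [h1, h2]
      simpa using hbase
    | succ d ih =>
      intro hdM
      have hiM : M - (d+1) < M := by omega
      have hisucc : M - (d+1) + 1 = M - d := by omega
      have hihyp := ih (by omega)
      rw [show M - d = M - (d+1) + 1 from hisucc.symm, heesucc] at hihyp
      have hres := hmove (M - (d+1)) hiM _ _ hihyp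
      rw [hisucc] at hres
      apply TZP.reach_mono (le_of_eq ?_) ?_ hres
      · rw [Finset.sum_eq_sum_Ico_succ_bot hiM, hisucc]
        ring
      · have h2 : (M - (M - (d+1))) = (M - (M - d)) + 1 := by omega
        rw [h2]
        have h3 : (M - (M - d) + 1) * (2*ℓ+1) = (M - (M - d)) * (2*ℓ+1) + (2*ℓ+1) :=
          Nat.succ_mul _ _
        rw [h3]
        omega
  have hfinal0 := hP M le_rfl
  rw [Nat.sub_self] at hfinal0
  have hueq : cc A piv (ee 0) (ζ (K 0)) = u := by
    show ζ (K 0) = u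
    rw [hK0]
    exact hζ0
  rw [hueq, hK0, hρ0, hρn] at hfinal0
  rw [← Finset.range_eq_Ico, Nat.sub_zero] at hfinal0
  -- counting and final numeric bounds
  set aa : ℕ → ℝ := fun j => if TZP.jv ρ rr (K j) (K (j+1)) then
      min (rr (K j)) (rr (K (j+1))) else 0 with haa
  clear_value M K mlev ee oh aa
  have htpyl : ∀ z : V, tpy G w ℓ A piv ε D' z + 1 ≤ ℓ := by
    intro z
    have := TZP.tpy_le (G := G) (w := w) (ℓ := ℓ) (A := A) (p := piv) (ε := ε) (D' := D') z
    omega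
  have haa_eq : ∀ j, TZP.jv ρ rr (K j) (K (j+1)) → aa j = VV (mlev j + 1) := by
    intro j hjv
    have hmeq : mlev j = min (tpy G w ℓ A piv ε D' (ζ (K j)))
        (tpy G w ℓ A piv ε D' (ζ (K (j+1)))) := by
      simp only [hmlev]
      rw [if_pos hjv]
    have haaj : aa j = min (rr (K j)) (rr (K (j+1))) := by
      simp only [haa]
      rw [if_pos hjv]
    rcases le_total (tpy G w ℓ A piv ε D' (ζ (K j)))
      (tpy G w ℓ A piv ε D' (ζ (K (j+1)))) with hc | hc
    · have h1 : rr (K j) ≤ rr (K (j+1)) := by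
        rw [hrr]
        exact hVVmono _ _ (by omega) (htpyl _)
      rw [haaj, min_eq_left h1, hmeq, min_eq_left hc]
    · have h1 : rr (K (j+1)) ≤ rr (K j) := by
        rw [hrr]
        exact hVVmono _ _ (by omega) (htpyl _)
      rw [haaj, min_eq_right h1, hmeq, min_eq_right hc]
  have haa_nonneg : ∀ j, 0 ≤ aa j := by
    intro j
    simp only [haa]
    split
    · rename_i hjv
      have := hVVpos (mlev j + 1) (by omega)
      have h2 := haa_eq j hjv
      simp only [haa] at h2
      rw [if_pos hjv] at h2
      linarith
    · exact le_rfl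
  have hSSnn : ∀ m : ℕ, 0 ≤ SS ℓ ε D' m := TZP.SS_nonneg hε hD'pos
  have hSSa : ∀ j, SS ℓ ε D' (mlev j) ≤ (12/5) * ε * aa j := by
    intro j
    by_cases hjv : TZP.jv ρ rr (K j) (K (j+1))
    · have h1 : SS ℓ ε D' (mlev j) ≤ (6/5) * TT ℓ ε D' (mlev j) :=
        TZP.SS_le hℓ hε (by linarith) hD'pos (hmlev_top j)
      have hTTid : TT ℓ ε D' (mlev j) = ε * TT ℓ ε D' (mlev j + 1) := by
        rw [TZP.TT, TZP.TT, ← mul_assoc, ← pow_succ']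
        congr 2
        have := hmlev_top j
        omega
      have h2 : TT ℓ ε D' (mlev j + 1) / 2 ≤ VV (mlev j + 1) :=
        hVV_ge_TT _ (by omega) (by have := hmlev_top j; omega)
      have h3 := haa_eq j hjv
      have hTTp := TZP.TT_pos (ℓ := ℓ) hε hD'pos (mlev j + 1)
      rw [h3]
      nlinarith
    · have hm0 : mlev j = 0 := by
        simp only [hmlev]
        rw [if_neg hjv]
      have ha0 : aa j = 0 := by
        simp only [haa]
        rw [if_neg hjv]
      rw [hm0, ha0, hSS0]
      simp
  have hVV0 : VV 0 = 0 := by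
    rw [hVV]
    dsimp only
    rw [if_pos rfl]
  have hVVl : VV ℓ = 2 * D' := by
    rw [hVV]
    dsimp only
    rw [if_neg (by omega), if_pos le_rfl]
  have hlayer : ∀ j, aa j = ∑ t ∈ Finset.range ℓ,
      (if VV (t+1) ≤ aa j then VV (t+1) - VV t else 0) := by
    intro j
    by_cases hjv : TZP.jv ρ rr (K j) (K (j+1))
    · have h3 := haa_eq j hjv
      set sle : ℕ := mlev j + 1 with hsle
      have hs1 : 1 ≤ sle := by omega
      have hsl : sle ≤ ℓ := by have := hmlev_top j; omega
      have hcond : ∀ t, t < ℓ → ((VV (t+1) ≤ aa j) ↔ t < sle) := by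
        intro t ht
        rw [h3]
        constructor
        · intro hle
          by_contra hge
          have := hVVstrict sle (t+1) (by omega) (by omega)
          linarith
        · intro hlt
          exact hVVmono _ _ (by omega) (by omega)
      have hfil : (Finset.range ℓ).filter (fun t => VV (t+1) ≤ aa j)
          = Finset.range sle := by
        ext t
        simp only [Finset.mem_filter, Finset.mem_range]
        constructor
        · rintro ⟨h1, h2⟩
          exact (hcond t h1).1 h2
        · intro h
          exact ⟨by omega, (hcond t (by omega)).2 h⟩
      rw [← Finset.sum_filter, hfil, Finset.sum_range_sub (fun t => VV t), hVV0, h3, hsle]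
      ring
    · have ha0 : aa j = 0 := by
        simp only [haa]
        rw [if_neg hjv]
      rw [ha0]
      symm
      apply Finset.sum_eq_zero
      intro t _
      rw [if_neg]
      have := hVVpos (t+1) (by omega)
      linarith
  have hρ0' : ∀ k, k ≤ n → 0 ≤ ρ k := by
    intro k hk
    rw [← hρ0]
    exact hρmono k hk 0 (Nat.zero_le k)
  have hρn' : ∀ k, k ≤ n → ρ k ≤ ρ n := fun k hk => hρmono n le_rfl k hk
  have hcount : ∀ θ : ℝ, 0 < θ → ∀ P : ℕ → Prop,
      (∀ i, i < M → P i → θ ≤ rr (K i)) →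
      (((Finset.range M).filter P).card : ℝ) ≤ 2 * (D' / θ) + 2 := by
    intro θ hθ P hP
    have hKlt' : ∀ i < M, TZP.KK n ρ rr i ≠ n := by
      rw [← hK]
      exact hKlt
    have hP' : ∀ i, i < M → P i → θ ≤ rr (TZP.KK n ρ rr i) := by
      rw [← hK]
      exact hP
    have := TZP.count_le n ρ rr hKlt' hρ0' hρn' P θ hθ hP'
    rwa [hρn] at this
  have hsum_aa : ∑ j ∈ Finset.range M, aa j ≤ 2 * ℓ * D' + 4 * D' := by
    have hswap : ∑ j ∈ Finset.range M, aa j = ∑ t ∈ Finset.range ℓ,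
        ∑ j ∈ Finset.range M, (if VV (t+1) ≤ aa j then VV (t+1) - VV t else 0) := by
      rw [Finset.sum_comm]
      exact Finset.sum_congr rfl fun j _ => hlayer j
    rw [hswap]
    have hterm : ∀ t ∈ Finset.range ℓ,
        ∑ j ∈ Finset.range M, (if VV (t+1) ≤ aa j then VV (t+1) - VV t else 0)
          ≤ 2 * D' + 2 * (VV (t+1) - VV t) := by
      intro t htr
      rw [Finset.mem_range] at htr
      have hθ : 0 < VV (t+1) := hVVpos _ (by omega)
      have hVt : 0 ≤ VV t := by
        rcases Nat.eq_zero_or_pos t with rfl | h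
        · rw [hVV0]
        · exact (hVVpos t h).le
      have hc : 0 ≤ VV (t+1) - VV t := by
        have := hVVmono t (t+1) (by omega) (by omega)
        linarith
      have hcard := hcount (VV (t+1)) hθ (fun j => VV (t+1) ≤ aa j) ?hP
      case hP =>
        intro i _ hPi
        by_cases hjv : TZP.jv ρ rr (K i) (K (i+1))
        · have : aa i ≤ rr (K i) := by
            simp only [haa]
            rw [if_pos hjv]
            exact min_le_left _ _
          linarith
        · exfalso
          have : aa i = 0 := by
            simp only [haa]
            rw [if_neg hjv]
          rw [this] at hPi
          linarith
      have hsum_ite : ∑ j ∈ Finset.range M, (if VV (t+1) ≤ aa j then VV (t+1) - VV t else 0)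
          = (((Finset.range M).filter (fun j => VV (t+1) ≤ aa j)).card : ℝ)
            * (VV (t+1) - VV t) := by
        rw [← Finset.sum_filter, Finset.sum_const, nsmul_eq_mul]
      rw [hsum_ite]
      have hVle : VV (t+1) - VV t ≤ VV (t+1) := by linarith
      have h1 : (((Finset.range M).filter (fun j => VV (t+1) ≤ aa j)).card : ℝ)
          * (VV (t+1) - VV t) ≤ (2 * (D' / VV (t+1)) + 2) * (VV (t+1) - VV t) := by
        apply mul_le_mul_of_nonneg_right hcard hc
      have h2 : (2 * (D' / VV (t+1)) + 2) * (VV (t+1) - VV t)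
          ≤ 2 * D' + 2 * (VV (t+1) - VV t) := by
        have hdd : (D' / VV (t+1)) * (VV (t+1) - VV t) ≤ (D' / VV (t+1)) * VV (t+1) := by
          apply mul_le_mul_of_nonneg_left hVle
          positivity
        have hcancel : (D' / VV (t+1)) * VV (t+1) = D' := by
          field_simp
        nlinarith
      linarith
    calc ∑ t ∈ Finset.range ℓ, ∑ j ∈ Finset.range M,
          (if VV (t+1) ≤ aa j then VV (t+1) - VV t else 0)
        ≤ ∑ t ∈ Finset.range ℓ, (2 * D' + 2 * (VV (t+1) - VV t)) :=
          Finset.sum_le_sum hterm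
      _ = ℓ * (2 * D') + 2 * (VV ℓ - VV 0) := by
          rw [Finset.sum_add_distrib, Finset.sum_const, Finset.card_range,
            ← Finset.mul_sum, Finset.sum_range_sub (fun t => VV t)]
          ring
      _ = 2 * ℓ * D' + 4 * D' := by
          rw [hVVl, hVV0]
          ring
  -- bound on M
  have hVV1 : VV 1 = TT ℓ ε D' 1 / 2 := by
    rw [hVV]
    dsimp only
    rw [if_neg (by omega), if_neg (by omega)]
  have hMbound : (M : ℝ) ≤ 2 * (D' / VV 1) + 2 := by
    have := hcount (VV 1) (hVVpos 1 le_rfl) (fun _ => True) ?hP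
    case hP =>
      intro i _ _
      rw [hrr]
      exact hVVmono 1 _ (by omega) (htpyl _)
    rwa [Finset.filter_true, Finset.card_range] at this
  set X : ℝ := (1 / ε) ^ (ℓ - 1) with hX
  have hXpos : 0 < X := by positivity
  have hX1 : 1 ≤ X := by
    apply one_le_pow₀
    rw [le_div_iff₀ hε]
    linarith
  have hTT1 : TT ℓ ε D' 1 = ε ^ (ℓ - 1) * D' := by rw [TZP.TT]
  have hεp : (0:ℝ) < ε ^ (ℓ - 1) := pow_pos hε _
  have hXinv : X = 1 / ε ^ (ℓ - 1) := by
    rw [hX, div_pow, one_pow]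
  have hDVV : D' / VV 1 = 2 * X := by
    rw [hVV1, hTT1, hXinv]
    field_simp
  have hMX : (M : ℝ) ≤ 4 * X + 2 := by
    rw [hDVV] at hMbound
    linarith
  -- sum of shift costs
  have hSsum : ∑ j ∈ Finset.range M, SS ℓ ε D' (mlev j)
      ≤ (12/5) * ε * (2 * ℓ * D' + 4 * D') := by
    calc ∑ j ∈ Finset.range M, SS ℓ ε D' (mlev j)
        ≤ ∑ j ∈ Finset.range M, (12/5) * ε * aa j :=
          Finset.sum_le_sum fun j _ => hSSa j
      _ = (12/5) * ε * ∑ j ∈ Finset.range M, aa j := by rw [← Finset.mul_sum]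
      _ ≤ (12/5) * ε * (2 * ℓ * D' + 4 * D') := by
          apply mul_le_mul_of_nonneg_left hsum_aa (by positivity)
  obtain ⟨M', hM'⟩ : ∃ M', M = M' + 1 := ⟨M - 1, by omega⟩
  have hmax : ∀ j, SS ℓ ε D' (ee j ⊔ mlev j)
      ≤ SS ℓ ε D' (ee j) + SS ℓ ε D' (mlev j) := by
    intro j
    rcases le_total (ee j) (mlev j) with h | h
    · rw [max_eq_right h]
      linarith [hSSnn (ee j)]
    · rw [max_eq_left h]
      linarith [hSSnn (mlev j)]
  have hees : ∑ j ∈ Finset.range M, SS ℓ ε D' (ee j)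
      ≤ ∑ j ∈ Finset.range M, SS ℓ ε D' (mlev j) := by
    rw [hM', Finset.sum_range_succ' (fun j => SS ℓ ε D' (ee j)) M']
    have h1 : ∀ j ∈ Finset.range M', SS ℓ ε D' (ee (j+1)) = SS ℓ ε D' (mlev j) := by
      intro j _
      rw [heesucc]
    rw [Finset.sum_congr rfl h1, hee0, hSS0, Finset.sum_range_succ]
    linarith [hSSnn (mlev M')]
  have heeM : SS ℓ ε D' (ee M ⊔ 0) ≤ ∑ j ∈ Finset.range M, SS ℓ ε D' (mlev j) := by
    rw [max_eq_left (Nat.zero_le _), hM', heesucc]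
    exact Finset.single_le_sum (fun j _ => hSSnn (mlev j))
      (Finset.self_mem_range_succ M')
  have hohsum : ∑ j ∈ Finset.range M, oh j + SS ℓ ε D' (ee M ⊔ 0)
      ≤ 5 * ∑ j ∈ Finset.range M, SS ℓ ε D' (mlev j) := by
    have h1 : ∑ j ∈ Finset.range M, oh j ≤
        ∑ j ∈ Finset.range M, (SS ℓ ε D' (ee j) + 3 * SS ℓ ε D' (mlev j)) := by
      apply Finset.sum_le_sum
      intro j _
      rw [hoh]
      dsimp only
      have := hmax j
      linarith
    rw [Finset.sum_add_distrib] at h1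
    have h2 : ∑ j ∈ Finset.range M, 3 * SS ℓ ε D' (mlev j)
        = 3 * ∑ j ∈ Finset.range M, SS ℓ ε D' (mlev j) := by
      rw [← Finset.mul_sum]
    rw [h2] at h1
    linarith
  have hLr2 : (2:ℝ) ≤ (ℓ:ℝ) := by exact_mod_cast hℓ
  have hcostD : D' - 0 + ∑ j ∈ Finset.range M, oh j + SS ℓ ε D' (ee M ⊔ 0)
      ≤ (1 + 1000 * (ℓ:ℝ) * ε) * D := by
    have h1 : D' - 0 + ∑ j ∈ Finset.range M, oh j + SS ℓ ε D' (ee M ⊔ 0)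
        ≤ D' + 5 * ((12/5) * ε * (2 * ℓ * D' + 4 * D')) := by
      have := le_trans hohsum (by linarith [hSsum] :
        5 * ∑ j ∈ Finset.range M, SS ℓ ε D' (mlev j)
          ≤ 5 * ((12/5) * ε * (2 * ℓ * D' + 4 * D')))
      linarith
    have h2 : D' + 5 * ((12/5) * ε * (2 * ℓ * D' + 4 * D'))
        = D' * (1 + 24 * (ℓ:ℝ) * ε + 48 * ε) := by ring
    have h3 : (0:ℝ) ≤ 1 + 24 * (ℓ:ℝ) * ε + 48 * ε := by positivity
    have h4 : D' * (1 + 24 * (ℓ:ℝ) * ε + 48 * ε)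
        ≤ ((1 + ε) * D) * (1 + 24 * (ℓ:ℝ) * ε + 48 * ε) :=
      mul_le_mul_of_nonneg_right hD'lt h3
    have h5 : ((1 + ε) * D) * (1 + 24 * (ℓ:ℝ) * ε + 48 * ε)
        ≤ (1 + 1000 * (ℓ:ℝ) * ε) * D := by
      have he2 : ε * ε ≤ ε := by nlinarith
      have hfac : (1 + ε) * (1 + 24 * (ℓ:ℝ) * ε + 48 * ε) ≤ 1 + 1000 * (ℓ:ℝ) * ε := by
        nlinarith [mul_pos hε (lt_of_lt_of_le (by norm_num : (0:ℝ) < 2) hLr2),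
          mul_nonneg (mul_nonneg (by linarith : (0:ℝ) ≤ (ℓ:ℝ)) hε.le) (by nlinarith : (0:ℝ) ≤ ε * ε)]
      calc ((1 + ε) * D) * (1 + 24 * (ℓ:ℝ) * ε + 48 * ε)
          = ((1 + ε) * (1 + 24 * (ℓ:ℝ) * ε + 48 * ε)) * D := by ring
        _ ≤ (1 + 1000 * (ℓ:ℝ) * ε) * D :=
            mul_le_mul_of_nonneg_right hfac hDpos.le
    linarith
  -- extract the path
  obtain ⟨mm, σ, hm1, hm2, hm3, hm4, hm5⟩ := hfinal0
  refine ⟨mm, σ, hm2, hm3, ?_, ?_, ?_⟩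
  · have hcast : (mm:ℝ) ≤ ((M * (2*ℓ+1) + ℓ : ℕ) : ℝ) := Nat.cast_le.2 hm1
    have hceil : X ≤ (⌈X⌉₊ : ℝ) := Nat.le_ceil X
    have hceil1 : (1:ℝ) ≤ (⌈X⌉₊ : ℝ) := le_trans hX1 hceil
    have hNval : ((M * (2*ℓ+1) + ℓ : ℕ) : ℝ) = (M:ℝ) * (2*(ℓ:ℝ)+1) + (ℓ:ℝ) := by
      push_cast
      ring
    rw [hNval] at hcast
    have hstep1 : (M:ℝ) * (2*(ℓ:ℝ)+1) + (ℓ:ℝ) ≤ (4*X+2) * (2*(ℓ:ℝ)+1) + (ℓ:ℝ) := by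
      have : (0:ℝ) ≤ 2*(ℓ:ℝ)+1 := by positivity
      nlinarith
    have hstep2 : (4*X+2) * (2*(ℓ:ℝ)+1) + (ℓ:ℝ) ≤ 1000 * (ℓ:ℝ) * (⌈X⌉₊ : ℝ) := by
      nlinarith [mul_nonneg (sub_nonneg.2 hX1) (sub_nonneg.2 hLr2),
        mul_le_mul_of_nonneg_right hceil (by linarith : (0:ℝ) ≤ (ℓ:ℝ)),
        mul_nonneg (sub_nonneg.2 hceil1) (by linarith : (0:ℝ) ≤ (ℓ:ℝ))]
    calc (mm:ℝ) ≤ (M:ℝ) * (2*(ℓ:ℝ)+1) + (ℓ:ℝ) := hcast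
      _ ≤ (4*X+2) * (2*(ℓ:ℝ)+1) + (ℓ:ℝ) := hstep1
      _ ≤ 1000 * (ℓ:ℝ) * (⌈X⌉₊ : ℝ) := hstep2
  · intro j hj
    exact hm4 j hj
  · calc ∑ j ∈ Finset.range mm, wdist G w (σ j) (σ (j + 1))
        ≤ D' - 0 + ∑ j ∈ Finset.range M, oh j + SS ℓ ε D' (ee M ⊔ 0) := hm5
      _ ≤ (1 + 1000 * (ℓ:ℝ) * ε) * D := hcostD
      _ = (1 + 1000 * (ℓ:ℝ) * ε) * wdist G w u v := by rw [hD]
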